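/- Let f: R^e → R^e have components f_i(q) = r_i q_i |q_i|^{x−1} with r_i > 0 and x > 1, let K ⊂ R^e be a linear subspace, Π the orthogonal projection onto K, and fix q_d ∈ R^e, b ∈ R^e. Then the map Ψ: K → K, Ψ(q₀) = Π(f(q_d + q₀) − b), is coercive on K: ⟨Ψ(q₀), q₀⟩ / ‖q₀‖ → ∞ as ‖q₀‖ → ∞ with q₀ ∈ K. -/

import Mathlib

open Filter Real

-- scalar lower bound
lemma hw_scalar (r t x : ℝ) (hr : 0 < r) (hx : 1 < x) (a : ℝ) :
    r / 2 ^ x * |a| ^ (x + 1) - (r * (3 * |t|) ^ x * (2 * |t|) + r / 2 ^ x * (2 * |t|) ^ (x + 1))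
      ≤ r * (t + a) * |t + a| ^ (x - 1) * a := by
  have hx0 : (0:ℝ) < x := by linarith
  have h2x : (0:ℝ) < 2 ^ x := rpow_pos_of_pos (by norm_num) x
  have hc : 0 < r / 2 ^ x := div_pos hr h2x
  rcases le_or_gt |a| (2 * |t|) with hle | hgt
  · -- bounded region
    have habs : |r * (t + a) * |t + a| ^ (x - 1) * a| ≤ r * (3 * |t|) ^ x * (2 * |t|) := by
      have h1 : |t + a| ≤ 3 * |t| := by
        have := abs_add_le t a
        linarith [abs_add_le t a]
      have h2 : |t + a| ^ x = |t + a| * |t + a| ^ (x - 1) := by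
        rw [← Real.rpow_one_add' (abs_nonneg _) (by linarith)]
        ring_nf
      have h3 : |t + a| ^ x ≤ (3 * |t|) ^ x :=
        Real.rpow_le_rpow (abs_nonneg _) h1 hx0.le
      calc |r * (t + a) * |t + a| ^ (x - 1) * a|
          = r * (|t + a| * |t + a| ^ (x - 1)) * |a| := by
            rw [abs_mul, abs_mul, abs_mul, abs_of_pos hr,
              abs_rpow_of_nonneg (abs_nonneg _), abs_abs]; ring
        _ = r * |t + a| ^ x * |a| := by rw [h2]
        _ ≤ r * (3 * |t|) ^ x * |a| :=
            mul_le_mul_of_nonneg_right (mul_le_mul_of_nonneg_left h3 hr.le) (abs_nonneg a)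
        _ ≤ r * (3 * |t|) ^ x * (2 * |t|) :=
            mul_le_mul_of_nonneg_left hle (by positivity)
    have h4 : r / 2 ^ x * |a| ^ (x + 1) ≤ r / 2 ^ x * (2 * |t|) ^ (x + 1) := by
      apply mul_le_mul_of_nonneg_left (Real.rpow_le_rpow (abs_nonneg _) hle (by linarith)) hc.le
    nlinarith [abs_le.1 (le_refl |r * (t + a) * |t + a| ^ (x - 1) * a|), neg_abs_le (r * (t + a) * |t + a| ^ (x - 1) * a)]
  · -- large |a|
    have ha0 : 0 < |a| := by linarith [abs_nonneg t]
    have hta : |a| / 2 ≤ |t + a| := by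
      have := abs_sub_abs_le_abs_sub (a) (-t)
      have h : |a - -t| = |t + a| := by rw [sub_neg_eq_add]; ring_nf
      have := abs_neg t
      nlinarith [abs_sub_abs_le_abs_sub a (-t), abs_neg t]
    have hprod : a ^ 2 / 2 ≤ (t + a) * a := by
      have h1 : t * a ≥ -(|t| * |a|) := by
        have := neg_abs_le (t * a); rw [abs_mul] at this; linarith
      have h2 : a^2 = |a|^2 := (sq_abs a).symm
      nlinarith
    have hD : 0 ≤ r * (3 * |t|) ^ x * (2 * |t|) + r / 2 ^ x * (2 * |t|) ^ (x + 1) := by positivity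
    have key : r / 2 ^ x * |a| ^ (x + 1) ≤ r * (t + a) * |t + a| ^ (x - 1) * a := by
      have hA : (|a| / 2) ^ (x - 1) ≤ |t + a| ^ (x - 1) :=
        Real.rpow_le_rpow (by positivity) hta (by linarith)
      have e1 : r * (t + a) * |t + a| ^ (x - 1) * a = r * (|t + a| ^ (x - 1)) * ((t + a) * a) := by ring
      have e2 : r / 2 ^ x * |a| ^ (x + 1) = r * ((|a| / 2) ^ (x - 1)) * (a ^ 2 / 2) := by
        rw [Real.div_rpow (abs_nonneg a) (by norm_num)]
        have hsq : |a| ^ ((2:ℕ):ℝ) = a ^ 2 := by rw [Real.rpow_natCast, sq_abs]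
        have hthis : |a| ^ (x + 1) = |a| ^ (x - 1) * a ^ 2 := by
          rw [← hsq, ← Real.rpow_add ha0]; congr 1; push_cast; ring
        have h2 : (2:ℝ) ^ x = 2 ^ (x - 1) * 2 := by
          rw [show x = (x-1)+1 by ring, Real.rpow_add_one (two_ne_zero)]; ring_nf
        rw [hthis, h2]
        field_simp
      rw [e1, e2]
      have hpos1 : 0 ≤ r * (|a| / 2) ^ (x - 1) := by positivity
      have : r * (|a| / 2) ^ (x - 1) ≤ r * |t + a| ^ (x - 1) :=
        mul_le_mul_of_nonneg_left hA hr.le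
      have hq : 0 ≤ a ^ 2 / 2 := by positivity
      calc r * (|a| / 2) ^ (x - 1) * (a ^ 2 / 2)
          ≤ r * |t + a| ^ (x - 1) * (a ^ 2 / 2) := mul_le_mul_of_nonneg_right this hq
        _ ≤ r * |t + a| ^ (x - 1) * ((t + a) * a) := by
            apply mul_le_mul_of_nonneg_left hprod (by positivity)
    linarith

/-- With `f` the Hazen-Williams nonlinearity (`r_i > 0`, `x > 1`),
`K ⊂ ℝ^e` a subspace, `Π` the orthogonal projection onto `K` and fixed `q_d, b ∈ ℝ^e`,
the map `Ψ : K → K`, `Ψ(q₀) = Π(f(q_d + q₀) − b)` is coercive on `K`: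
`⟨Ψ(q₀), q₀⟩ / ‖q₀‖ → ∞` as `‖q₀‖ → ∞` in `K`. -/
theorem projected_hazen_williams_coercive
    (e : ℕ) (r : Fin e → ℝ) (hr : ∀ i, 0 < r i) (x : ℝ) (hx : 1 < x)
    (f : EuclideanSpace ℝ (Fin e) → EuclideanSpace ℝ (Fin e))
    (hf : ∀ q i, f q i = r i * q i * |q i| ^ (x - 1))
    (K : Submodule ℝ (EuclideanSpace ℝ (Fin e)))
    (qd b : EuclideanSpace ℝ (Fin e))
    (Ψ : K → K)
    (hΨ : ∀ q₀ : K, Ψ q₀ = K.orthogonalProjection (f (qd + (q₀ : EuclideanSpace ℝ (Fin e))) - b)) :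
    Tendsto (fun q₀ : K => (inner ℝ (Ψ q₀) q₀ : ℝ) / ‖q₀‖)
      (comap (fun q₀ : K => ‖q₀‖) atTop) atTop := by
  set l := comap (fun q₀ : K => ‖q₀‖) atTop with hl
  rcases Nat.eq_zero_or_pos e with he | he
  · -- trivial case: the space is trivial, so the filter is ⊥
    subst he
    have hbot : l = ⊥ := by
      rw [← Filter.eventually_false_iff_eq_bot]
      have h1 := (tendsto_comap : Tendsto (fun q₀ : K => ‖q₀‖) l atTop).eventually
        (eventually_gt_atTop (0 : ℝ))
      filter_upwards [h1] with q hq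
      rw [Subsingleton.elim q 0] at hq
      simp at hq
    rw [hbot]
    exact tendsto_bot
  · have hx0 : (0 : ℝ) < x := by linarith
    have h2x : (0 : ℝ) < 2 ^ x := rpow_pos_of_pos (by norm_num) x
    have hse : (0 : ℝ) < Real.sqrt e := Real.sqrt_pos.2 (by exact_mod_cast he)
    -- minimum resistance
    obtain ⟨i₀, -, hi₀⟩ := Finset.exists_min_image Finset.univ r
      ⟨⟨0, he⟩, Finset.mem_univ _⟩
    set c₁ : ℝ := r i₀ with hc₁
    have hc₁pos : 0 < c₁ := hr i₀
    set D : ℝ := ∑ i, (r i * (3 * |qd i|) ^ x * (2 * |qd i|)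
      + r i / 2 ^ x * (2 * |qd i|) ^ (x + 1)) with hD
    have hDnn : 0 ≤ D := Finset.sum_nonneg fun i _ => add_nonneg
      (mul_nonneg (mul_nonneg (hr i).le (by positivity)) (by positivity))
      (mul_nonneg (div_nonneg (hr i).le (by positivity)) (by positivity))
    set c₂ : ℝ := c₁ / 2 ^ x / (Real.sqrt e) ^ (x + 1) with hc₂
    have hc₂pos : 0 < c₂ := div_pos (div_pos hc₁pos h2x) (rpow_pos_of_pos hse _)
    -- key pointwise lower bound
    have key : ∀ q₀ : K,
        c₁ / 2 ^ x * (‖(q₀ : EuclideanSpace ℝ (Fin e))‖ / Real.sqrt e) ^ (x + 1) - D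
          - ‖b‖ * ‖(q₀ : EuclideanSpace ℝ (Fin e))‖ ≤ (inner ℝ (Ψ q₀) q₀ : ℝ) := by
      intro q₀
      set a : EuclideanSpace ℝ (Fin e) := (q₀ : EuclideanSpace ℝ (Fin e)) with ha
      have h1 : (inner ℝ (Ψ q₀) q₀ : ℝ) = (inner ℝ (f (qd + a) - b) a : ℝ) := by
        rw [hΨ q₀]
        exact Submodule.inner_orthogonalProjectionOnto_eq_of_mem_right (K := K) q₀ _
      have h2 : (inner ℝ (f (qd + a) - b) a : ℝ)
          = (inner ℝ (f (qd + a)) a : ℝ) - (inner ℝ b a : ℝ) := inner_sub_left _ _ _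
      have h3 : (inner ℝ b a : ℝ) ≤ ‖b‖ * ‖a‖ := real_inner_le_norm b a
      have h4 : (inner ℝ (f (qd + a)) a : ℝ) = ∑ i, f (qd + a) i * a i := by
        simp [PiLp.inner_apply, RCLike.inner_apply, conj_trivial, mul_comm]
      have h5 : ∀ i, c₁ / 2 ^ x * |a i| ^ (x + 1)
          - (r i * (3 * |qd i|) ^ x * (2 * |qd i|)
            + r i / 2 ^ x * (2 * |qd i|) ^ (x + 1)) ≤ f (qd + a) i * a i := by
        intro i
        have hfi : f (qd + a) i = r i * (qd i + a i) * |qd i + a i| ^ (x - 1) := by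
          rw [hf]; simp [PiLp.add_apply]
        rw [hfi]
        refine le_trans ?_ (hw_scalar (r i) (qd i) x (hr i) hx (a i))
        have hcr : c₁ / 2 ^ x * |a i| ^ (x + 1) ≤ r i / 2 ^ x * |a i| ^ (x + 1) := by
          have h1 : c₁ ≤ r i := hi₀ i (Finset.mem_univ i)
          have h2 : (0:ℝ) ≤ |a i| ^ (x + 1) := by positivity
          have h3 : c₁ / 2 ^ x ≤ r i / 2 ^ x := by
            rw [div_eq_mul_inv, div_eq_mul_inv]
            exact mul_le_mul_of_nonneg_right h1 (by positivity)
          exact mul_le_mul_of_nonneg_right h3 h2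
        linarith
      have h6 : c₁ / 2 ^ x * (∑ i, |a i| ^ (x + 1)) - D ≤ ∑ i, f (qd + a) i * a i := by
        rw [hD, Finset.mul_sum, ← Finset.sum_sub_distrib]
        exact Finset.sum_le_sum fun i _ => h5 i
      -- max coordinate
      have hnorm : ‖a‖ ^ 2 = ∑ i, |a i| ^ 2 := by
        rw [EuclideanSpace.norm_eq]
        rw [Real.sq_sqrt (Finset.sum_nonneg fun i _ => by positivity)]
        simp [Real.norm_eq_abs]
      have h7 : (‖a‖ / Real.sqrt e) ^ (x + 1) ≤ ∑ i, |a i| ^ (x + 1) := by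
        obtain ⟨j, -, hj⟩ := Finset.exists_le_of_sum_le (s := (Finset.univ : Finset (Fin e)))
          (f := fun _ : Fin e => ‖a‖ ^ 2 / e) (g := fun i => |a i| ^ 2)
          ⟨⟨0, he⟩, Finset.mem_univ _⟩
          (by
            rw [Finset.sum_const, Finset.card_univ, Fintype.card_fin, nsmul_eq_mul]
            rw [mul_div_cancel₀ _ (by exact_mod_cast he.ne' : (e : ℝ) ≠ 0)]
            exact hnorm.le)
        have hja : ‖a‖ / Real.sqrt e ≤ |a j| := by
          rw [div_le_iff₀ hse]
          have he' : (0:ℝ) < e := by exact_mod_cast he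
          have hsqs : (Real.sqrt e) ^ 2 = (e : ℝ) := Real.sq_sqrt (Nat.cast_nonneg e)
          have hbig : ‖a‖ ^ 2 ≤ (|a j| * Real.sqrt e) ^ 2 := by
            rw [mul_pow, hsqs]
            calc ‖a‖ ^ 2 = ‖a‖ ^ 2 / e * e := by field_simp
              _ ≤ |a j| ^ 2 * e := mul_le_mul_of_nonneg_right hj he'.le
          have := Real.sqrt_le_sqrt hbig
          rwa [Real.sqrt_sq (norm_nonneg a), Real.sqrt_sq (by positivity)] at this
        calc (‖a‖ / Real.sqrt e) ^ (x + 1) ≤ |a j| ^ (x + 1) :=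
              Real.rpow_le_rpow (by positivity) hja (by linarith)
          _ ≤ ∑ i, |a i| ^ (x + 1) :=
              Finset.single_le_sum (f := fun i => |a i| ^ (x + 1))
                (fun i _ => by positivity) (Finset.mem_univ j)
      rw [h1, h2, h4]
      have := mul_le_mul_of_nonneg_left h7 (by positivity : (0:ℝ) ≤ c₁ / 2 ^ x)
      linarith
    -- the lower-bound function tends to atTop
    have hlow : Tendsto (fun t : ℝ => c₂ * t ^ x - D - ‖b‖) atTop atTop := by
      have h1 : Tendsto (fun t : ℝ => c₂ * t ^ x) atTop atTop :=
        (tendsto_rpow_atTop hx0).const_mul_atTop hc₂pos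
      have h2 := tendsto_atTop_add_const_right atTop (-(D + ‖b‖)) h1
      exact h2.congr fun t => by ring
    have hcomp : Tendsto (fun q₀ : K => c₂ * ‖q₀‖ ^ x - D - ‖b‖) l atTop :=
      hlow.comp tendsto_comap
    apply tendsto_atTop_mono' l _ hcomp
    have hev : ∀ᶠ q₀ : K in l, (1 : ℝ) ≤ ‖q₀‖ :=
      tendsto_comap.eventually (eventually_ge_atTop (1 : ℝ))
    filter_upwards [hev] with q₀ hq₀
    have hapos : (0:ℝ) < ‖q₀‖ := by linarith
    have hk := key q₀
    have hna : ‖(q₀ : EuclideanSpace ℝ (Fin e))‖ = ‖q₀‖ := rfl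
    rw [hna] at hk
    have hstep : c₂ * ‖q₀‖ ^ x - D - ‖b‖
        ≤ (c₁ / 2 ^ x * (‖q₀‖ / Real.sqrt e) ^ (x + 1) - D - ‖b‖ * ‖q₀‖) / ‖q₀‖ := by
      have e1 : c₁ / 2 ^ x * (‖q₀‖ / Real.sqrt e) ^ (x + 1) / ‖q₀‖ = c₂ * ‖q₀‖ ^ x := by
        rw [Real.div_rpow (norm_nonneg _) hse.le, Real.rpow_add_one hapos.ne' x, hc₂,
          div_eq_iff hapos.ne']
        ring
      have e2 : D / ‖q₀‖ ≤ D := by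
        rw [div_le_iff₀ hapos]
        nlinarith
      have hdiv : (c₁ / 2 ^ x * (‖q₀‖ / Real.sqrt e) ^ (x + 1) - D - ‖b‖ * ‖q₀‖) / ‖q₀‖
          = c₁ / 2 ^ x * (‖q₀‖ / Real.sqrt e) ^ (x + 1) / ‖q₀‖ - D / ‖q₀‖ - ‖b‖ := by
        rw [sub_div, sub_div, mul_div_cancel_right₀ _ hapos.ne']
      rw [hdiv, e1]
      linarith
    refine le_trans hstep ?_
    gcongr
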